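/- Let A be a nontrivial subgroup of a group B and b ∈ B. If the subgroups b^{-i} A b^i for i ∈ ℤ generate their free product inside B (i.e., the conjugates A^{b^i} are in free position), then b is transcendental over A, meaning the subgroup generated by A and b is isomorphic to the free product A * ⟨b⟩ with ⟨b⟩ infinite cyclic, via the natural map. -/

import Mathlib

open Monoid

namespace FreePositionAux

variable {B : Type*} [Group B] (A : Subgroup B)

abbrev NN := Monoid.CoprodI (fun _ : ℤ => A)

def shiftHom (m : ℤ) : NN A →* NN A :=
  Monoid.CoprodI.lift fun i => Monoid.CoprodI.of (M := fun _ : ℤ => A) (i := i - m)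

@[simp] lemma shiftHom_of (m i : ℤ) (a : A) :
    shiftHom A m (Monoid.CoprodI.of (M := fun _ : ℤ => A) (i := i) a)
      = Monoid.CoprodI.of (M := fun _ : ℤ => A) (i := i - m) a :=
  Monoid.CoprodI.lift_of _ _

lemma shiftHom_comp (m k : ℤ) :
    (shiftHom A m).comp (shiftHom A k) = shiftHom A (m + k) := by
  ext i a
  simp [sub_sub, add_comm]

lemma shiftHom_zero : shiftHom A 0 = MonoidHom.id _ := by
  ext i a
  simp

def shiftEquiv (m : ℤ) : NN A ≃* NN A :=
  MonoidHom.toMulEquiv (shiftHom A m) (shiftHom A (-m))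
    (by rw [shiftHom_comp]; simp [shiftHom_zero])
    (by rw [shiftHom_comp]; simp [shiftHom_zero])

@[simp] lemma shiftEquiv_apply (m : ℤ) (x : NN A) :
    shiftEquiv A m x = shiftHom A m x := rfl

def shiftAut : Multiplicative ℤ →* MulAut (NN A) where
  toFun z := shiftEquiv A z.toAdd
  map_one' := by
    ext x
    show shiftHom A _ x = x
    simp [shiftHom_zero]
  map_mul' z w := by
    ext x
    show shiftHom A _ x = shiftHom A _ (shiftHom A _ x)
    rw [← MonoidHom.comp_apply, shiftHom_comp, toAdd_mul]

variable (b : B)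

def fmap : NN A →* B :=
  Monoid.CoprodI.lift
    (fun i : ℤ =>
      (MulAut.conj (b ^ (-i))).toMonoidHom.comp A.subtype :
      ∀ i : ℤ, (fun _ : ℤ => A) i →* B)

@[simp] lemma fmap_of (i : ℤ) (a : A) :
    fmap A b (Monoid.CoprodI.of (M := fun _ : ℤ => A) (i := i) a)
      = b ^ (-i) * a * (b ^ (-i))⁻¹ := by
  simp only [fmap, Monoid.CoprodI.lift_of, MonoidHom.comp_apply, MulEquiv.coe_toMonoidHom,
    MulAut.conj_apply, Subgroup.coe_subtype]

lemma fmap_compat (z : Multiplicative ℤ) :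
    (fmap A b).comp (shiftAut A z).toMonoidHom
      = (MulAut.conj (zpowersHom B b z)).toMonoidHom.comp (fmap A b) := by
  ext i a
  show fmap A b (shiftHom A z.toAdd (Monoid.CoprodI.of _)) = _
  simp only [shiftHom_of, fmap_of, MonoidHom.comp_apply, MulEquiv.coe_toMonoidHom,
    MulAut.conj_apply, zpowersHom_apply]
  group

def psi : (NN A) ⋊[shiftAut A] Multiplicative ℤ →* B :=
  SemidirectProduct.lift (fmap A b) (zpowersHom B b) (fmap_compat A b)

def Phi : Coprod A (Multiplicative ℤ) →* (NN A) ⋊[shiftAut A] Multiplicative ℤ :=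
  Coprod.lift (SemidirectProduct.inl.comp (Monoid.CoprodI.of (M := fun _ : ℤ => A) (i := (0:ℤ))))
    SemidirectProduct.inr

def r1 : NN A →* Coprod A (Multiplicative ℤ) :=
  Monoid.CoprodI.lift fun i : ℤ =>
    (MulAut.conj ((Coprod.inr (Multiplicative.ofAdd (-i)) : Coprod A (Multiplicative ℤ)))).toMonoidHom.comp
      Coprod.inl

@[simp] lemma r1_of (i : ℤ) (a : A) :
    r1 A (Monoid.CoprodI.of (M := fun _ : ℤ => A) (i := i) a)
      = Coprod.inr (Multiplicative.ofAdd (-i)) * Coprod.inl a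
          * (Coprod.inr (Multiplicative.ofAdd (-i)) : Coprod A (Multiplicative ℤ))⁻¹ := by
  simp [r1]

lemma r1_compat (z : Multiplicative ℤ) :
    (r1 A).comp (shiftAut A z).toMonoidHom
      = (MulAut.conj ((Coprod.inr : Multiplicative ℤ →* Coprod A (Multiplicative ℤ)) z)).toMonoidHom.comp (r1 A) := by
  ext i a
  show r1 A (shiftHom A z.toAdd (Monoid.CoprodI.of _)) = _
  simp only [shiftHom_of, r1_of, MonoidHom.comp_apply, MulEquiv.coe_toMonoidHom,
    MulAut.conj_apply]
  rw [show -(i - z.toAdd) = z.toAdd + -i by ring, ofAdd_add, map_mul]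
  simp [mul_assoc, mul_inv_rev]


def r : (NN A) ⋊[shiftAut A] Multiplicative ℤ →* Coprod A (Multiplicative ℤ) :=
  SemidirectProduct.lift (r1 A) Coprod.inr (r1_compat A)

lemma r_comp_Phi : (r A).comp (Phi A) = MonoidHom.id _ := by
  apply Coprod.hom_ext
  · ext a
    simp [Phi, r]
  · ext
    simp [Phi, r]

lemma Phi_injective : Function.Injective (Phi A) := by
  have h : Function.LeftInverse (r A) (Phi A) := fun g => by
    have := DFunLike.congr_fun (r_comp_Phi A) g
    simpa using this
  exact h.injective

lemma psi_comp_Phi : (psi A b).comp (Phi A) = Coprod.lift A.subtype (zpowersHom B b) := by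
  apply Coprod.hom_ext
  · ext a
    show psi A b (Phi A (Coprod.inl a)) = A.subtype a
    have h1 : Phi A (Coprod.inl a)
        = SemidirectProduct.inl (Monoid.CoprodI.of (M := fun _ : ℤ => A) (i := (0:ℤ)) a) := rfl
    rw [h1, psi, SemidirectProduct.lift_inl, fmap_of]
    simp
  · ext
    simp [Phi, psi]

lemma shift_fixed {m : ℤ} (hm : m ≠ 0) {n : NN A} (h : shiftHom A m n = n) : n = 1 := by
  classical
  set w := Monoid.CoprodI.Word.equiv (M := fun _ : ℤ => A) n with hw
  have hsymm : ∀ u : Monoid.CoprodI.Word (fun _ : ℤ => A),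
      (Monoid.CoprodI.Word.equiv (M := fun _ : ℤ => A)).symm u = u.prod := fun _ => rfl
  have hprod : w.prod = n := by
    rw [← hsymm]
    exact (Monoid.CoprodI.Word.equiv).symm_apply_apply n
  let F : (Σ _ : ℤ, A) → (Σ _ : ℤ, A) := fun p => ⟨p.1 - m, p.2⟩
  let w' : Monoid.CoprodI.Word (fun _ : ℤ => A) :=
    { toList := w.toList.map F
      ne_one := by
        intro l hl
        rcases List.mem_map.1 hl with ⟨p, hp, rfl⟩
        exact w.ne_one p hp
      chain_ne := by
        refine List.isChain_map_of_isChain F ?_ w.chain_ne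
        intro a c hac
        simpa [F, sub_left_inj] using hac }
  have hprod' : w'.prod = shiftHom A m n := by
    rw [← hprod]
    show List.prod (List.map (fun l : Σ _ : ℤ, A => (Monoid.CoprodI.of l.snd : NN A))
          (List.map F w.toList))
        = shiftHom A m (List.prod (List.map (fun l : Σ _ : ℤ, A =>
            (Monoid.CoprodI.of l.snd : NN A)) w.toList))
    rw [map_list_prod (shiftHom A m), List.map_map, List.map_map]
    refine congrArg List.prod (List.map_congr_left fun p _ => ?_)
    exact (shiftHom_of A m p.1 p.2).symm
  have hww : w' = w := by
    apply (Monoid.CoprodI.Word.equiv (M := fun _ : ℤ => A)).symm.injective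
    rw [hsymm, hsymm, hprod, hprod', h]
  have hlist : w.toList.map F = w.toList := congrArg Monoid.CoprodI.Word.toList hww
  rcases hl : w.toList with _ | ⟨p, t⟩
  · rw [← hprod]
    show List.prod (List.map (fun l : Σ _ : ℤ, A =>
        (Monoid.CoprodI.of l.snd : NN A)) w.toList) = 1
    rw [hl]
    simp
  · exfalso
    rw [hl, List.map_cons] at hlist
    have hp : F p = p := (List.cons.injEq _ _ _ _ ▸ hlist).1
    have : p.1 - m = p.1 := congrArg Sigma.fst hp
    omega


lemma psi_injective (hA : A ≠ ⊥) (hfree : Function.Injective (fmap A b)) :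
    Function.Injective (psi A b) := by
  rw [injective_iff_map_eq_one]
  rintro ⟨n, z⟩ hnz
  obtain ⟨a, ha⟩ := Subgroup.ne_bot_iff_exists_ne_one.1 hA
  have hψ : fmap A b n * b ^ z.toAdd = 1 := hnz
  set t := z.toAdd with ht
  have h1 : fmap A b n = (b ^ t)⁻¹ := mul_eq_one_iff_eq_inv.1 hψ
  by_cases hm : t = 0
  · have hz1 : z = 1 := by
      have : Multiplicative.ofAdd t = Multiplicative.ofAdd 0 := congrArg _ hm
      exact this
    have hn1 : n = 1 := by
      apply hfree
      rw [h1, hm, map_one]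
      simp
    rw [hz1, hn1]
    rfl
  · have hfix : shiftHom A t n = n := by
      apply hfree
      have hc := DFunLike.congr_fun (fmap_compat A b z) n
      simp only [MonoidHom.comp_apply, MulEquiv.coe_toMonoidHom, MulAut.conj_apply,
        zpowersHom_apply] at hc
      have hc' : fmap A b (shiftHom A t n) = b ^ t * fmap A b n * (b ^ t)⁻¹ := hc
      rw [hc', h1]
      simp
    have hn : n = 1 := shift_fixed A hm hfix
    exfalso
    have hb : b ^ t = 1 := by
      rw [hn, map_one] at h1
      exact inv_eq_one.1 h1.symm
    have hbneg : b ^ (-t) = 1 := by rw [zpow_neg, hb, inv_one]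
    have e1 : fmap A b (Monoid.CoprodI.of (M := fun _ : ℤ => A) (i := t) a)
        = fmap A b (Monoid.CoprodI.of (M := fun _ : ℤ => A) (i := (0:ℤ)) a) := by
      rw [fmap_of, fmap_of, hbneg]
      simp
    have e2 := hfree e1
    classical
    let π : NN A →* A := Monoid.CoprodI.lift (Pi.mulSingle (0:ℤ) (MonoidHom.id A))
    have e3 : π (Monoid.CoprodI.of (M := fun _ : ℤ => A) (i := t) a)
        = π (Monoid.CoprodI.of (M := fun _ : ℤ => A) (i := (0:ℤ)) a) := congrArg π e2
    rw [Monoid.CoprodI.lift_of, Monoid.CoprodI.lift_of, Pi.mulSingle_eq_same,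
      Pi.mulSingle_eq_of_ne hm] at e3
    exact ha (by simpa using e3.symm)

theorem main {hA : A ≠ ⊥}
    (hfree : Function.Injective (fmap A b)) :
    Function.Injective
      (Monoid.Coprod.lift A.subtype (zpowersHom B b) :
        Monoid.Coprod A (Multiplicative ℤ) →* B) := by
  have hinj : Function.Injective ((psi A b).comp (Phi A)) := by
    rw [MonoidHom.coe_comp]
    exact (psi_injective A b hA hfree).comp (Phi_injective A)
  rwa [psi_comp_Phi] at hinj

end FreePositionAux

/-- Let `A` be a nontrivial subgroup of a group `B` and `b ∈ B`.  If the
conjugates `A^{bⁱ} = b⁻ⁱ A bⁱ` (`i ∈ ℤ`) are in free position, i.e. the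
canonical map from the free product of copies of `A` indexed by `ℤ` into `B`
is injective, then `b` is transcendental over `A`: the canonical map
`A * ℤ → B` (identical on `A`, the generator of `ℤ` to `b`) is injective. -/
theorem transcendental_of_free_position
    {B : Type*} [Group B] (A : Subgroup B) (hA : A ≠ ⊥) (b : B)
    (hfree : Function.Injective
      (Monoid.CoprodI.lift
        (fun i : ℤ =>
          (MulAut.conj (b ^ (-i))).toMonoidHom.comp A.subtype :
          ∀ i : ℤ, (fun _ : ℤ => A) i →* B))) :
    Function.Injective
      (Monoid.Coprod.lift A.subtype (zpowersHom B b) :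
        Monoid.Coprod A (Multiplicative ℤ) →* B) := by
  exact FreePositionAux.main A b (hA := hA) hfree
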